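/- Let G be a countable group acting continuously on a compact metric space X, and let μ be a probability measure on G whose support S is finite and generates G. Assume (i) μ is evenly distributed: for all n, m ∈ ℕ there is μ_{n,m} ∈ [0,1] such that μ^{*n}({g}) = μ_{n,m} for every g ∈ G with ‖g‖_S = m; and (ii) for every continuous f : X → ℝ and every x ∈ X, lim_{n→∞} (1/|G_n|) Σ_{g ∈ G_n} f(gx) = ∫_X f dν for a Borel probability measure ν. Then for every x ∈ X, the measures μ^{*n} * δ_x converge to ν in the weak-* topology, where δ_x is the Dirac measure at x. -/

import Mathlib

open MeasureTheory Filter Topology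

noncomputable section

namespace RWalk

variable {G : Type*} [Group G] [MeasurableSpace G]

/-- The `n`-fold convolution power of a measure on a group, with `μ^{*0} = δ_e`. -/
def convPow (μ : Measure G) : ℕ → Measure G
  | 0 => Measure.dirac 1
  | n + 1 => (convPow μ n).mconv μ

/-- The word length of `g` with respect to a generating set `S`:
`‖g‖_S = min {n | g = s₁ ⋯ s_n, sᵢ ∈ S}`. -/
def wordLen (S : Set G) (g : G) : ℕ :=
  sInf {n | ∃ l : List G, l.length = n ∧ (∀ s ∈ l, s ∈ S) ∧ l.prod = g}

/-- Convolution `μ * ν` of a measure `μ` on `G` with a measure `ν` on a `G`-space `X`: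
the pushforward of `μ ⊗ ν` under the action map `(g,x) ↦ g • x`. -/
def actConv {X : Type*} [MeasurableSpace X] [MulAction G X]
    (μ : Measure G) (ν : Measure X) : Measure X :=
  Measure.map (fun p : G × X => p.1 • p.2) (μ.prod ν)

end RWalk

open RWalk

open Finset Pointwise
set_option linter.unusedSectionVars false
set_option maxHeartbeats 1000000
namespace RWalkAux

section PartA


variable {G : Type*} [Group G] [DecidableEq G]

/-- words of length exactly n -/
def T (S : Finset G) : ℕ → Finset G
  | 0 => {1}
  | n+1 => T S n * S

def W (S : Finset G) (g : G) : Set ℕ :=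
  {n | ∃ l : List G, l.length = n ∧ (∀ s ∈ l, s ∈ (S : Set G)) ∧ l.prod = g}

lemma wordLen_eq_sInf (S : Finset G) (g : G) :
    RWalk.wordLen (S : Set G) g = sInf (W S g) := rfl

lemma mem_T {S : Finset G} {n : ℕ} {g : G} :
    g ∈ T S n ↔ n ∈ W S g := by
  induction n generalizing g with
  | zero =>
    simp only [T, Finset.mem_singleton, W, Set.mem_setOf_eq]
    constructor
    · rintro rfl; exact ⟨[], rfl, by simp, by simp⟩
    · rintro ⟨l, hl, _, hp⟩
      rw [List.length_eq_zero_iff] at hl; subst hl; simpa using hp.symm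
  | succ n ih =>
    constructor
    · intro h
      rw [T, Finset.mem_mul] at h
      obtain ⟨a, ha, s, hs, rfl⟩ := h
      obtain ⟨l, hl, hm, hp⟩ := ih.1 ha
      refine ⟨l ++ [s], by simp [hl], ?_, by simp [hp]⟩
      intro t ht
      rcases List.mem_append.1 ht with h1 | h2
      · exact hm t h1
      · simp only [List.mem_singleton] at h2; subst h2; exact hs
    · rintro ⟨l, hl, hm, rfl⟩
      have hne : l ≠ [] := by intro h; subst h; simp at hl
      have hsplit : l.dropLast ++ [l.getLast hne] = l := List.dropLast_append_getLast hne
      rw [T, Finset.mem_mul]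
      refine ⟨l.dropLast.prod, ?_, l.getLast hne, ?_, ?_⟩
      · apply ih.2
        refine ⟨l.dropLast, ?_, ?_, rfl⟩
        · have hld : l.dropLast.length = l.length - 1 := List.length_dropLast
          omega
        · intro t ht; exact hm t (List.mem_of_mem_dropLast ht)
      · exact hm _ (List.getLast_mem hne)
      · conv_rhs => rw [← hsplit]
        rw [List.prod_append]
        simp

lemma mem_T_mul {S : Finset G} {a b : ℕ} {g h : G}
    (hg : g ∈ T S a) (hh : h ∈ T S b) : g * h ∈ T S (a + b) := by
  rw [mem_T] at *
  obtain ⟨l, hl, hlm, hlp⟩ := hg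
  obtain ⟨l', hl', hlm', hlp'⟩ := hh
  exact ⟨l ++ l', by simp [hl, hl'], by
    intro t ht; rcases List.mem_append.1 ht with h1 | h2
    exacts [hlm t h1, hlm' t h2], by simp [hlp, hlp']⟩

lemma wordLen_le_of_mem_T {S : Finset G} {n : ℕ} {g : G} (h : g ∈ T S n) :
    RWalk.wordLen (S : Set G) g ≤ n :=
  Nat.sInf_le (mem_T.1 h)

/-- if wordLen g = m then (if the word set is nonempty or m ≥ 1) g ∈ T S m. -/
lemma mem_T_of_wordLen {S : Finset G} {m : ℕ} {g : G}
    (hm : RWalk.wordLen (S : Set G) g = m) (h1 : 1 ≤ m) : g ∈ T S m := by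
  rw [mem_T]
  have hne : (W S g).Nonempty := by
    by_contra h
    rw [Set.not_nonempty_iff_eq_empty] at h
    rw [wordLen_eq_sInf, h] at hm
    simp [Nat.sInf_empty] at hm; omega
  have := Nat.sInf_mem hne
  rwa [← wordLen_eq_sInf, hm] at this

lemma one_mem_T_zero {S : Finset G} : (1 : G) ∈ T S 0 := by simp [T]

/-- an element of T S n with wordLen 0 is 1 -/
lemma eq_one_of_mem_T_wordLen_zero {S : Finset G} {n : ℕ} {g : G} (h : g ∈ T S n)
    (h0 : RWalk.wordLen (S : Set G) g = 0) : g = 1 := by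
  have hne : (W S g).Nonempty := ⟨n, mem_T.1 h⟩
  have := Nat.sInf_mem hne
  rw [← wordLen_eq_sInf, h0] at this
  obtain ⟨l, hl, _, hp⟩ := this
  rw [List.length_eq_zero_iff] at hl; subst hl; simpa using hp.symm



lemma wordLen_one {S : Finset G} : RWalk.wordLen (S : Set G) 1 = 0 := by
  rw [wordLen_eq_sInf, Nat.sInf_eq_zero]
  exact Or.inl ⟨[], rfl, by simp, by simp⟩

/-- the sphere of radius m, as a Finset -/
def Sph (S : Finset G) (m : ℕ) : Finset G :=
  if m = 0 then {1} else (T S m).filter (fun g => RWalk.wordLen (S : Set G) g = m)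

lemma wordLen_of_mem_Sph {S : Finset G} {m : ℕ} {g : G} (h : g ∈ Sph S m) :
    RWalk.wordLen (S : Set G) g = m := by
  unfold Sph at h
  split at h
  · next h0 => subst h0; simp only [Finset.mem_singleton] at h; subst h; exact wordLen_one
  · exact (Finset.mem_filter.1 h).2

lemma mem_Sph_of_wordLen {S : Finset G} {m : ℕ} {g : G} (h1 : 1 ≤ m)
    (h : RWalk.wordLen (S : Set G) g = m) : g ∈ Sph S m := by
  unfold Sph
  rw [if_neg (by omega)]
  exact Finset.mem_filter.2 ⟨mem_T_of_wordLen h h1, h⟩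

lemma coe_Sph {S : Finset G} {m : ℕ} (h1 : 1 ≤ m) :
    (Sph S m : Set G) = {g | RWalk.wordLen (S : Set G) g = m} := by
  ext g
  exact ⟨fun h => wordLen_of_mem_Sph h, fun h => mem_Sph_of_wordLen h1 h⟩

/-- ball: union of spheres of radius ≤ n -/
def B (S : Finset G) (n : ℕ) : Finset G :=
  (Finset.range (n+1)).biUnion (Sph S)

lemma T_subset_B {S : Finset G} {n : ℕ} : T S n ⊆ B S n := by
  intro g hg
  have hle := wordLen_le_of_mem_T hg
  set m := RWalk.wordLen (S : Set G) g with hm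
  apply Finset.mem_biUnion.2
  refine ⟨m, Finset.mem_range.2 (by omega), ?_⟩
  rcases Nat.eq_zero_or_pos m with h0 | h1
  · have := eq_one_of_mem_T_wordLen_zero hg (by omega)
    subst this
    unfold Sph
    rw [if_pos h0]
    simp
  · exact mem_Sph_of_wordLen h1 hm.symm

lemma mem_T_of_mem_Sph {S : Finset G} {m : ℕ} {g : G} (h : g ∈ Sph S m) : g ∈ T S m := by
  unfold Sph at h
  split at h
  · next h0 => subst h0; simp only [Finset.mem_singleton] at h; subst h; exact one_mem_T_zero
  · exact (Finset.mem_filter.1 h).1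

/-- downward propagation of sphere nonemptiness -/
lemma sph_nonempty_mono {S : Finset G} {N m : ℕ} (h : (Sph S N).Nonempty) (hm : m ≤ N) :
    (Sph S m).Nonempty := by
  rcases Nat.eq_zero_or_pos m with h0 | h1
  · subst h0; exact ⟨1, by unfold Sph; simp⟩
  obtain ⟨g, hg⟩ := h
  have hwg : RWalk.wordLen (S : Set G) g = N := wordLen_of_mem_Sph hg
  have hgT : g ∈ T S N := mem_T_of_mem_Sph hg
  -- witness list of length N
  obtain ⟨l, hl, hlm, hlp⟩ := mem_T.1 hgT
  -- the prefix of length m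
  set h0 := (l.take m).prod with hh0
  have htake : (l.take m).length = m := by
    rw [List.length_take]; omega
  have hT : h0 ∈ T S m := mem_T.2 ⟨l.take m, htake, fun s hs => hlm s (List.mem_of_mem_take hs), rfl⟩
  have hdrop : (l.drop m).prod ∈ T S (N - m) := by
    apply mem_T.2
    exact ⟨l.drop m, by rw [List.length_drop]; omega, fun s hs => hlm s (List.mem_of_mem_drop hs), rfl⟩
  have hglue : h0 * (l.drop m).prod = g := by
    rw [hh0, ← List.prod_append, List.take_append_drop, hlp]
  refine ⟨h0, mem_Sph_of_wordLen h1 ?_⟩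
  have hle : RWalk.wordLen (S : Set G) h0 ≤ m := wordLen_le_of_mem_T hT
  by_contra hne
  have hlt : RWalk.wordLen (S : Set G) h0 < m := by omega
  set r := RWalk.wordLen (S : Set G) h0 with hr
  have hTr : h0 ∈ T S r := by
    rcases Nat.eq_zero_or_pos r with hr0 | hr1
    · have := eq_one_of_mem_T_wordLen_zero hT (by omega)
      rw [this, hr0]; exact one_mem_T_zero
    · exact mem_T_of_wordLen hr.symm hr1
  have : g ∈ T S (r + (N - m)) := hglue ▸ mem_T_mul hTr hdrop
  have := wordLen_le_of_mem_T this
  omega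


end PartA

section PartB


variable {G : Type*} [Group G] [Countable G] [MeasurableSpace G] [MeasurableSingletonClass G]

lemma measSet (s : Set G) : MeasurableSet s := s.to_countable.measurableSet

lemma mconv_singleton (κ ν : Measure G) [SFinite κ] [SFinite ν] (x : G) :
    (κ.mconv ν) {x} = ∑' y : G, κ {y} * ν {y⁻¹ * x} := by
  rw [Measure.mconv, Measure.map_apply (measurable_of_countable _) (measSet _)]
  rw [Measure.prod_apply (((fun p : G × G => p.1 * p.2) ⁻¹' {x}).to_countable.measurableSet)]
  have hset : ∀ a : G, (Prod.mk a ⁻¹' ((fun p : G × G => p.1 * p.2) ⁻¹' {x})) = {a⁻¹ * x} := by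
    intro a; ext b
    simp only [Set.mem_preimage, Set.mem_singleton_iff]
    constructor
    · intro h; rw [← h]; group
    · intro h; rw [h]; group
  simp_rw [hset]
  rw [lintegral_countable']
  exact tsum_congr fun y => mul_comm _ _

variable (μ : Measure G) [IsProbabilityMeasure μ]

lemma measurableMul₂ : MeasurableMul₂ G := ⟨measurable_of_countable _⟩

lemma convPow_prob (n : ℕ) : IsProbabilityMeasure (RWalk.convPow μ n) := by
  haveI := measurableMul₂ (G := G)
  induction n with
  | zero => rw [RWalk.convPow]; infer_instance
  | succ n ih =>
    rw [RWalk.convPow]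
    haveI := ih
    exact Measure.probabilitymeasure_of_probabilitymeasures_mconv _ _

/-- point mass of the n-th convolution power -/
def P (n : ℕ) (g : G) : ENNReal := RWalk.convPow μ n {g}

lemma P_zero_one : P μ 0 (1 : G) = 1 := by
  rw [P, RWalk.convPow, Measure.dirac_apply' _ (measSet _)]
  simp

lemma P_zero_ne {g : G} (h : g ≠ 1) : P μ 0 g = 0 := by
  rw [P, RWalk.convPow, Measure.dirac_apply' _ (measSet _)]
  simp [Set.indicator, Ne.symm h]

lemma P_succ (n : ℕ) (x : G) :
    P μ (n+1) x = ∑' y : G, P μ n y * μ {y⁻¹ * x} := by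
  haveI := convPow_prob μ n
  rw [P, RWalk.convPow, mconv_singleton]
  rfl

lemma P_le_one (n : ℕ) (g : G) : P μ n g ≤ 1 := by
  haveI := convPow_prob μ n
  exact prob_le_one

lemma P_ne_top (n : ℕ) (g : G) : P μ n g ≠ ⊤ :=
  fun h => by simpa [h] using P_le_one μ n g

lemma P_add (n k : ℕ) (x : G) :
    P μ (n + k) x = ∑' y : G, P μ n y * P μ k (y⁻¹ * x) := by
  induction k generalizing x with
  | zero =>
    rw [Nat.add_zero, tsum_eq_single x ?h]
    · rw [inv_mul_cancel, P_zero_one, mul_one]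
    case h =>
      intro y hy
      have : y⁻¹ * x ≠ 1 := by
        intro h
        rw [inv_mul_eq_one] at h
        exact hy h
      rw [P_zero_ne μ this, mul_zero]
  | succ k ih =>
    have h1 : n + (k+1) = (n + k) + 1 := by omega
    rw [h1, P_succ]
    have h2 : ∀ z : G, P μ (n+k) z * μ {z⁻¹ * x}
        = ∑' y : G, P μ n y * P μ k (y⁻¹ * z) * μ {z⁻¹ * x} := by
      intro z; rw [ih z, ENNReal.tsum_mul_right]
    rw [tsum_congr h2, ENNReal.tsum_comm]
    refine tsum_congr fun y => ?_
    rw [P_succ]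
    rw [← ENNReal.tsum_mul_left]
    rw [← (Equiv.mulLeft y).tsum_eq fun z => P μ n y * P μ k (y⁻¹ * z) * μ {z⁻¹ * x}]
    refine tsum_congr fun w => ?_
    have e1 : y⁻¹ * (y * w) = w := by group
    have e2 : (y * w)⁻¹ * x = w⁻¹ * (y⁻¹ * x) := by group
    rw [Equiv.coe_mulLeft, e1, e2, mul_assoc]


end PartB

section PartB2

variable {G : Type*} [Group G] [Countable G] [MeasurableSpace G] [MeasurableSingletonClass G]
  [DecidableEq G] (μ : Measure G) [IsProbabilityMeasure μ] {S : Finset G}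

lemma mem_T_single {s : G} (hs : s ∈ S) : s ∈ T S 1 :=
  mem_T.2 ⟨[s], rfl, by simpa using hs, by simp⟩

lemma P_support (hsupp : ∀ g : G, μ {g} ≠ 0 ↔ g ∈ S) (n : ℕ) :
    ∀ {g : G}, g ∉ T S n → P μ n g = 0 := by
  induction n with
  | zero =>
    intro g h
    simp only [T, Finset.mem_singleton] at h
    exact P_zero_ne μ h
  | succ n ih =>
    intro g h
    rw [P_succ]
    rw [ENNReal.tsum_eq_zero]
    intro y
    by_cases hy : y ∈ T S n
    · have hns : y⁻¹ * g ∉ S := by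
        intro hs
        exact h (by
          have := mem_T_mul hy (mem_T_single hs)
          simpa using this)
      have : μ {y⁻¹ * g} = 0 := by
        by_contra hne
        exact hns ((hsupp _).1 hne)
      rw [this, mul_zero]
    · rw [ih hy, zero_mul]

lemma P_pos (hsupp : ∀ g : G, μ {g} ≠ 0 ↔ g ∈ S) (n : ℕ) :
    ∀ {g : G}, g ∈ T S n → P μ n g ≠ 0 := by
  induction n with
  | zero =>
    intro g h
    simp only [T, Finset.mem_singleton] at h
    subst h
    rw [P_zero_one]
    exact one_ne_zero
  | succ n ih =>
    intro g h
    rw [T, Finset.mem_mul] at h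
    obtain ⟨y, hy, s, hs, rfl⟩ := h
    have hterm : P μ n y * μ {y⁻¹ * (y * s)} ≠ 0 := by
      have he : y⁻¹ * (y * s) = s := by group
      rw [he]
      exact mul_ne_zero (ih hy) ((hsupp s).2 hs)
    have hle : P μ n y * μ {y⁻¹ * (y * s)} ≤ P μ (n+1) (y * s) := by
      rw [P_succ]
      exact ENNReal.le_tsum y
    intro h0
    rw [h0] at hle
    exact hterm (le_antisymm hle (zero_le))

/-- real point masses -/
def p (n : ℕ) (g : G) : ℝ := (P μ n g).toReal

lemma p_nonneg (n : ℕ) (g : G) : 0 ≤ p μ n g := ENNReal.toReal_nonneg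

lemma p_supp (hsupp : ∀ g : G, μ {g} ≠ 0 ↔ g ∈ S) (n : ℕ) {g : G} (h : g ∉ T S n) :
    p μ n g = 0 := by
  rw [p, P_support μ hsupp n h, ENNReal.toReal_zero]

lemma p_pos (hsupp : ∀ g : G, μ {g} ≠ 0 ↔ g ∈ S) (n : ℕ) {g : G} (h : g ∈ T S n) :
    0 < p μ n g :=
  ENNReal.toReal_pos (P_pos μ hsupp n h) (P_ne_top μ n g)

lemma sum_p_eq_one (hsupp : ∀ g : G, μ {g} ≠ 0 ↔ g ∈ S) (n : ℕ) {A : Finset G}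
    (hA : T S n ⊆ A) : ∑ g ∈ A, p μ n g = 1 := by
  classical
  have hc : RWalk.convPow μ n ((↑A : Set G)ᶜ) = 0 := by
    have hrw : ((↑A : Set G)ᶜ) = ⋃ x ∈ ((↑A : Set G)ᶜ), {x} := (Set.biUnion_of_singleton _).symm
    rw [hrw, measure_biUnion_null_iff (Set.to_countable _)]
    intro x hx
    exact P_support μ hsupp n (fun hT => hx (Finset.mem_coe.2 (hA hT)))
  haveI := convPow_prob μ n
  have h1 : RWalk.convPow μ n (↑A : Set G) = 1 := by
    have := measure_add_measure_compl (μ := RWalk.convPow μ n) (measSet (↑A : Set G))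
    rw [hc, add_zero] at this
    rw [this]
    exact measure_univ
  have h2 : RWalk.convPow μ n (↑A : Set G) = ∑ g ∈ A, P μ n g := by
    have hun : (↑A : Set G) = ⋃ x ∈ A, ({x} : Set G) := by
      ext y; simp
    rw [hun, measure_biUnion_finset ?hd fun b _ => measSet {b}]
    case hd =>
      intro a _ b _ hab
      simp [Set.disjoint_singleton, hab]
    rfl
  have h3 : (∑ g ∈ A, P μ n g).toReal = ∑ g ∈ A, p μ n g :=
    ENNReal.toReal_sum fun a _ => P_ne_top μ n a
  rw [← h3, ← h2, h1, ENNReal.toReal_one]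

lemma p_conv (hsupp : ∀ g : G, μ {g} ≠ 0 ↔ g ∈ S) (n k : ℕ) (x : G) :
    p μ (n+k) x = ∑ y ∈ T S n, p μ n y * p μ k (y⁻¹ * x) := by
  have h := P_add μ n k x
  rw [tsum_eq_sum (s := T S n)
    (fun y hy => by rw [P_support μ hsupp n hy, zero_mul])] at h
  rw [p, h, ENNReal.toReal_sum fun a _ => ENNReal.mul_ne_top (P_ne_top μ n a) (P_ne_top μ k _)]
  exact Finset.sum_congr rfl fun y _ => ENNReal.toReal_mul

end PartB2

section PartC

variable {G : Type*} [Group G] [Countable G] [MeasurableSpace G] [MeasurableSingletonClass G]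
  [DecidableEq G] (μ : Measure G) [IsProbabilityMeasure μ] (S : Finset G)

/-- collision functional -/
def Fc (n : ℕ) : ℝ := ∑ x ∈ T S n, (p μ n x)^2

/-- squared ℓ² distance between two translates of the k-th distribution -/
def Dsq (N k : ℕ) (y₁ y₂ : G) : ℝ :=
  ∑ x ∈ T S (N+k), (p μ k (y₁⁻¹*x) - p μ k (y₂⁻¹*x))^2

variable {μ S}

lemma Fc_nonneg (n : ℕ) : 0 ≤ Fc μ S n :=
  Finset.sum_nonneg fun x _ => sq_nonneg _

/-- variance identity -/
lemma sum_var {A : Finset G} {w a : G → ℝ} (hw1 : ∑ y ∈ A, w y = 1) :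
    ∑ y ∈ A, w y * (a y - ∑ z ∈ A, w z * a z)^2
      = (∑ y ∈ A, w y * (a y)^2) - (∑ z ∈ A, w z * a z)^2 := by
  set m := ∑ z ∈ A, w z * a z with hm
  have : ∀ y ∈ A, w y * (a y - m)^2 = w y * (a y)^2 - 2 * m * (w y * a y) + m^2 * w y := by
    intro y _; ring
  rw [Finset.sum_congr rfl this, Finset.sum_add_distrib, Finset.sum_sub_distrib,
    ← Finset.mul_sum, ← Finset.mul_sum, hw1]
  ring

lemma jensen0 {A : Finset G} {w a : G → ℝ} (hw : ∀ y ∈ A, 0 ≤ w y)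
    (hw1 : ∑ y ∈ A, w y = 1) :
    (∑ z ∈ A, w z * a z)^2 ≤ ∑ y ∈ A, w y * (a y)^2 := by
  have h := sum_var (a := a) hw1
  have h2 : 0 ≤ ∑ y ∈ A, w y * (a y - ∑ z ∈ A, w z * a z)^2 :=
    Finset.sum_nonneg fun y hy => mul_nonneg (hw y hy) (sq_nonneg _)
  linarith

lemma jensen_gap {A : Finset G} {w a : G → ℝ} (hw : ∀ y ∈ A, 0 ≤ w y)
    (hw1 : ∑ y ∈ A, w y = 1) {y₁ y₂ : G} (h1 : y₁ ∈ A) (h2 : y₂ ∈ A) (hne : y₁ ≠ y₂) :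
    (∑ z ∈ A, w z * a z)^2 + (min (w y₁) (w y₂))/2 * (a y₁ - a y₂)^2
      ≤ ∑ y ∈ A, w y * (a y)^2 := by
  have h := sum_var (a := a) hw1
  set m := ∑ z ∈ A, w z * a z with hm
  have hpair : w y₁ * (a y₁ - m)^2 + w y₂ * (a y₂ - m)^2
      ≤ ∑ y ∈ A, w y * (a y - m)^2 := by
    have hsub : ({y₁, y₂} : Finset G) ⊆ A := by
      intro z hz
      rcases Finset.mem_insert.1 hz with rfl | hz
      · exact h1
      · rw [Finset.mem_singleton] at hz; subst hz; exact h2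
    have := Finset.sum_le_sum_of_subset_of_nonneg (f := fun y => w y * (a y - m)^2) hsub
      (fun y hy _ => mul_nonneg (hw y hy) (sq_nonneg _))
    rwa [Finset.sum_pair hne] at this
  have hmin1 : min (w y₁) (w y₂) ≤ w y₁ := min_le_left _ _
  have hmin2 : min (w y₁) (w y₂) ≤ w y₂ := min_le_right _ _
  have hmin0 : 0 ≤ min (w y₁) (w y₂) := le_min (hw _ h1) (hw _ h2)
  nlinarith [sq_nonneg (a y₁ + a y₂ - 2*m), sq_nonneg (a y₁ - m), sq_nonneg (a y₂ - m)]

/-- translated second moment -/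
lemma sum_sq_translate (hsupp : ∀ g : G, μ {g} ≠ 0 ↔ g ∈ S) {N k : ℕ} {y : G}
    (hy : y ∈ T S N) :
    ∑ x ∈ T S (N+k), (p μ k (y⁻¹*x))^2 = Fc μ S k := by
  have hinj : ∀ x ∈ T S (N+k), ∀ x' ∈ T S (N+k), y⁻¹*x = y⁻¹*x' → x = x' := by
    intro x _ x' _ h
    exact mul_left_cancel h
  have h1 : ∑ z ∈ (T S (N+k)).image (fun x => y⁻¹*x), (p μ k z)^2
      = ∑ x ∈ T S (N+k), (p μ k (y⁻¹*x))^2 := Finset.sum_image hinj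
  rw [← h1, Fc]
  symm
  apply Finset.sum_subset
  · intro z hz
    apply Finset.mem_image.2
    refine ⟨y * z, mem_T_mul hy hz, by group⟩
  · intro z _ hz
    rw [p_supp μ hsupp k hz]
    simp

/-- the key gap inequality -/
lemma gap_ineq (hsupp : ∀ g : G, μ {g} ≠ 0 ↔ g ∈ S) {N k : ℕ} {y₁ y₂ : G}
    (h1 : y₁ ∈ T S N) (h2 : y₂ ∈ T S N) (hne : y₁ ≠ y₂) :
    Fc μ S (N+k) + (min (p μ N y₁) (p μ N y₂))/2 * Dsq μ S N k y₁ y₂ ≤ Fc μ S k := by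
  have key : ∀ x ∈ T S (N+k),
      (p μ (N+k) x)^2 + (min (p μ N y₁) (p μ N y₂))/2 * (p μ k (y₁⁻¹*x) - p μ k (y₂⁻¹*x))^2
        ≤ ∑ y ∈ T S N, p μ N y * (p μ k (y⁻¹*x))^2 := by
    intro x _
    rw [p_conv μ hsupp N k x]
    exact jensen_gap (fun y _ => p_nonneg μ N y) (sum_p_eq_one μ hsupp N (le_refl _))
      h1 h2 hne
  have hsum := Finset.sum_le_sum key
  rw [Finset.sum_add_distrib, ← Finset.mul_sum] at hsum
  calc Fc μ S (N+k) + (min (p μ N y₁) (p μ N y₂))/2 * Dsq μ S N k y₁ y₂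
      ≤ ∑ x ∈ T S (N+k), ∑ y ∈ T S N, p μ N y * (p μ k (y⁻¹*x))^2 := hsum
    _ = ∑ y ∈ T S N, p μ N y * ∑ x ∈ T S (N+k), (p μ k (y⁻¹*x))^2 := by
        rw [Finset.sum_comm]
        exact Finset.sum_congr rfl fun y _ => (Finset.mul_sum _ _ _).symm
    _ = ∑ y ∈ T S N, p μ N y * Fc μ S k := by
        refine Finset.sum_congr rfl fun y hy => ?_
        rw [sum_sq_translate hsupp hy]
    _ = Fc μ S k := by
        rw [← Finset.sum_mul, sum_p_eq_one μ hsupp N (le_refl _), one_mul]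

/-- Fc is antitone -/
lemma Fc_le (hsupp : ∀ g : G, μ {g} ≠ 0 ↔ g ∈ S) (N k : ℕ) :
    Fc μ S (N+k) ≤ Fc μ S k := by
  have key : ∀ x ∈ T S (N+k),
      (p μ (N+k) x)^2 ≤ ∑ y ∈ T S N, p μ N y * (p μ k (y⁻¹*x))^2 := by
    intro x _
    rw [p_conv μ hsupp N k x]
    exact jensen0 (fun y _ => p_nonneg μ N y) (sum_p_eq_one μ hsupp N (le_refl _))
  have hsum := Finset.sum_le_sum key
  calc Fc μ S (N+k) ≤ ∑ x ∈ T S (N+k), ∑ y ∈ T S N, p μ N y * (p μ k (y⁻¹*x))^2 := hsum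
    _ = ∑ y ∈ T S N, p μ N y * ∑ x ∈ T S (N+k), (p μ k (y⁻¹*x))^2 := by
        rw [Finset.sum_comm]
        exact Finset.sum_congr rfl fun y _ => (Finset.mul_sum _ _ _).symm
    _ = ∑ y ∈ T S N, p μ N y * Fc μ S k := by
        refine Finset.sum_congr rfl fun y hy => ?_
        rw [sum_sq_translate hsupp hy]
    _ = Fc μ S k := by
        rw [← Finset.sum_mul, sum_p_eq_one μ hsupp N (le_refl _), one_mul]

lemma Fc_antitone (hsupp : ∀ g : G, μ {g} ≠ 0 ↔ g ∈ S) : Antitone (Fc μ S) := by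
  intro a b hab
  have : Fc μ S ((b - a) + a) ≤ Fc μ S a := Fc_le hsupp _ _
  rwa [Nat.sub_add_cancel hab] at this

end PartC

section PartC2

variable {G : Type*} [Group G] [Countable G] [MeasurableSpace G] [MeasurableSingletonClass G]
  [DecidableEq G] {μ : Measure G} [IsProbabilityMeasure μ] {S : Finset G}

lemma Dsq_nonneg (N k : ℕ) (y₁ y₂ : G) : 0 ≤ Dsq μ S N k y₁ y₂ :=
  Finset.sum_nonneg fun x _ => sq_nonneg _

lemma T_nonempty (hSne : S.Nonempty) (k : ℕ) : (T S k).Nonempty := by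
  induction k with
  | zero => exact ⟨1, one_mem_T_zero⟩
  | succ k ih => exact Finset.Nonempty.mul ih hSne

lemma exists_max (hsupp : ∀ g : G, μ {g} ≠ 0 ↔ g ∈ S) (hSne : S.Nonempty) (k : ℕ) :
    ∃ g ∈ T S k, Fc μ S k ≤ p μ k g := by
  obtain ⟨b, hb, hmax⟩ := Finset.exists_max_image (T S k) (p μ k) (T_nonempty hSne k)
  refine ⟨b, hb, ?_⟩
  calc Fc μ S k = ∑ x ∈ T S k, (p μ k x)^2 := rfl
    _ ≤ ∑ x ∈ T S k, p μ k b * p μ k x := by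
        refine Finset.sum_le_sum fun x hx => ?_
        rw [sq]
        exact mul_le_mul_of_nonneg_right (hmax x hx) (p_nonneg μ k x)
    _ = p μ k b * ∑ x ∈ T S k, p μ k x := by rw [Finset.mul_sum]
    _ = p μ k b := by rw [sum_p_eq_one μ hsupp k (le_refl _), mul_one]

lemma pad_T {ρ : ℕ} (hρT : (1:G) ∈ T S ρ) {g : G} {a : ℕ} (hg : g ∈ T S a) (j : ℕ) :
    g ∈ T S (a + j*ρ) := by
  induction j with
  | zero => simpa using hg
  | succ j ih =>
    have := mem_T_mul ih hρT
    rw [mul_one] at this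
    have harith : a + j*ρ + ρ = a + (j+1)*ρ := by ring
    rwa [harith] at this

lemma Dsq_to_zero (hsupp : ∀ g : G, μ {g} ≠ 0 ↔ g ∈ S) {Φ : ℝ}
    (hF : Tendsto (Fc μ S) atTop (𝓝 Φ)) {N : ℕ} {y₁ y₂ : G}
    (h1 : y₁ ∈ T S N) (h2 : y₂ ∈ T S N) (hne : y₁ ≠ y₂) :
    Tendsto (fun k => Dsq μ S N k y₁ y₂) atTop (𝓝 0) := by
  set m := min (p μ N y₁) (p μ N y₂) with hm
  have hm0 : 0 < m := lt_min (p_pos μ hsupp N h1) (p_pos μ hsupp N h2)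
  have hub : ∀ k, Dsq μ S N k y₁ y₂ ≤ (Fc μ S k - Fc μ S (N+k)) * (2/m) := by
    intro k
    have hg := gap_ineq hsupp (k := k) h1 h2 hne
    rw [← hm] at hg
    have h2 : m/2 * Dsq μ S N k y₁ y₂ ≤ Fc μ S k - Fc μ S (N+k) := by linarith
    calc Dsq μ S N k y₁ y₂ = (m/2 * Dsq μ S N k y₁ y₂) * (2/m) := by
          field_simp
      _ ≤ (Fc μ S k - Fc μ S (N+k)) * (2/m) :=
          mul_le_mul_of_nonneg_right h2 (by positivity)
  have hup : Tendsto (fun k => (Fc μ S k - Fc μ S (N+k)) * (2/m)) atTop (𝓝 0) := by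
    have hcomp : Tendsto (fun k => Fc μ S (N+k)) atTop (𝓝 Φ) := by
      have := hF.comp (tendsto_add_atTop_nat N)
      simpa [Function.comp_def, add_comm] using this
    have := (hF.sub hcomp).mul_const (2/m)
    simpa using this
  exact squeeze_zero (fun k => Dsq_nonneg N k y₁ y₂) hub hup

lemma escape (hsupp : ∀ g : G, μ {g} ≠ 0 ↔ g ∈ S)
    (hΦ : Tendsto (Fc μ S) atTop (𝓝 0)) (m : ℕ) :
    Tendsto (fun n => ∑ g ∈ Sph S m, p μ n g) atTop (𝓝 0) := by
  have hub : ∀ n, ∑ g ∈ Sph S m, p μ n g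
      ≤ ((Sph S m).card : ℝ) * Real.sqrt (Fc μ S n) := by
    intro n
    have hb : ∀ g ∈ Sph S m, p μ n g ≤ Real.sqrt (Fc μ S n) := by
      intro g _
      by_cases hT : g ∈ T S n
      · have hsq : (p μ n g)^2 ≤ Fc μ S n :=
          Finset.single_le_sum (fun x _ => sq_nonneg (p μ n x)) hT
        have := Real.sqrt_le_sqrt hsq
        rwa [Real.sqrt_sq (p_nonneg μ n g)] at this
      · rw [p_supp μ hsupp n hT]
        exact Real.sqrt_nonneg _
    calc ∑ g ∈ Sph S m, p μ n g ≤ ∑ _g ∈ Sph S m, Real.sqrt (Fc μ S n) :=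
          Finset.sum_le_sum hb
      _ = ((Sph S m).card : ℝ) * Real.sqrt (Fc μ S n) := by
          rw [Finset.sum_const, nsmul_eq_mul]
  have hup : Tendsto (fun n => ((Sph S m).card : ℝ) * Real.sqrt (Fc μ S n)) atTop (𝓝 0) := by
    have hsq : Tendsto (fun n => Real.sqrt (Fc μ S n)) atTop (𝓝 0) := by
      have := (Real.continuous_sqrt.tendsto 0).comp hΦ
      simpa [Function.comp_def] using this
    have := hsq.const_mul (((Sph S m).card : ℝ))
    simpa using this
  exact squeeze_zero
    (fun n => Finset.sum_nonneg fun g _ => p_nonneg μ n g) hub hup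

lemma Phi_pos_false (hsupp : ∀ g : G, μ {g} ≠ 0 ↔ g ∈ S) (hSne : S.Nonempty)
    {ρ : ℕ} (hρ1 : 1 ≤ ρ) (hρT : (1:G) ∈ T S ρ)
    (hne : ∀ m, (Sph S m).Nonempty)
    (hΦ0 : 0 < ⨅ n, Fc μ S n) : False := by
  set Φ := ⨅ n, Fc μ S n with hΦdef
  have hbdd : BddBelow (Set.range (Fc μ S)) :=
    ⟨0, by rintro x ⟨n, rfl⟩; exact Fc_nonneg n⟩
  have hF : Tendsto (Fc μ S) atTop (𝓝 Φ) := tendsto_atTop_ciInf (Fc_antitone hsupp) hbdd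
  obtain ⟨J, hJ⟩ := exists_nat_gt (2/Φ)
  have hJ0 : 0 < J := by
    have : (0:ℝ) < 2/Φ := div_pos two_pos hΦ0
    by_contra h
    push_neg at h
    interval_cases J
    simp at hJ
    linarith
  have hwex : ∀ i : ℕ, ∃ g, g ∈ Sph S ((i+1)*ρ) := fun i => hne _
  choose w hwmem using hwex
  have hwlen : ∀ i, RWalk.wordLen (S : Set G) (w i) = (i+1)*ρ :=
    fun i => wordLen_of_mem_Sph (hwmem i)
  have hwT : ∀ i, w i ∈ T S ((i+1)*ρ) := fun i => mem_T_of_mem_Sph (hwmem i)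
  set N := (J+1)*ρ with hNdef
  have hwTN : ∀ i, i < J → w i ∈ T S N := by
    intro i hi
    have := pad_T hρT (hwT i) (J - i)
    have harith : (i+1)*ρ + (J-i)*ρ = N := by
      rw [hNdef, ← add_mul]
      congr 1
      omega
    rwa [harith] at this
  have h1N : (1:G) ∈ T S N := by
    have := pad_T hρT (one_mem_T_zero (S := S)) (J+1)
    simpa [hNdef] using this
  have hw1 : ∀ i, w i ≠ 1 := by
    intro i h
    have := hwlen i
    rw [h, wordLen_one] at this
    have : (i+1)*ρ = 0 := this.symm
    have : 1 ≤ (i+1)*ρ := Nat.one_le_iff_ne_zero.2 (by positivity)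
    omega
  have hev : ∀ᶠ k in atTop, ∀ i ∈ Finset.range J, Dsq μ S N k (w i) 1 < (Φ/2)^2 := by
    rw [Filter.eventually_all_finset]
    intro i hi
    have hD := Dsq_to_zero hsupp hF (hwTN i (Finset.mem_range.1 hi)) h1N (hw1 i)
    exact hD.eventually_lt_const (by positivity)
  obtain ⟨k, hk⟩ := hev.exists
  obtain ⟨gm, hgT, hgmax⟩ := exists_max hsupp hSne k
  have hΦle : Φ ≤ p μ k gm := le_trans (ciInf_le hbdd k) hgmax
  have hgTN : gm ∈ T S (N + k) := by
    have := pad_T hρT hgT (J+1)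
    rwa [← hNdef, add_comm] at this
  have hpt : ∀ i, i < J → Φ/2 < p μ k ((w i)⁻¹ * gm) := by
    intro i hi
    have hterm : (p μ k ((w i)⁻¹*gm) - p μ k ((1:G)⁻¹*gm))^2 ≤ Dsq μ S N k (w i) 1 :=
      Finset.single_le_sum (f := fun x => (p μ k ((w i)⁻¹*x) - p μ k ((1:G)⁻¹*x))^2)
        (fun x _ => sq_nonneg _) hgTN
    rw [inv_one, one_mul] at hterm
    have hlt := lt_of_le_of_lt hterm (hk i (Finset.mem_range.2 hi))
    by_contra hcon
    push_neg at hcon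
    nlinarith [hlt, hΦle, hΦ0, p_nonneg μ k ((w i)⁻¹ * gm)]
  have hinj : ∀ i ∈ Finset.range J, ∀ j ∈ Finset.range J,
      (w i)⁻¹*gm = (w j)⁻¹*gm → i = j := by
    intro i _ j _ h
    have h1 : (w i)⁻¹ = (w j)⁻¹ := mul_right_cancel h
    have h2 : w i = w j := inv_injective h1
    have := hwlen i
    rw [h2, hwlen j] at this
    have := Nat.eq_of_mul_eq_mul_right (by omega : 0 < ρ) this
    omega
  have hsumA : ∑ g ∈ (Finset.range J).image (fun i => (w i)⁻¹ * gm), p μ k g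
      = ∑ i ∈ Finset.range J, p μ k ((w i)⁻¹*gm) := Finset.sum_image hinj
  have hgt : (J:ℝ) * (Φ/2) < ∑ i ∈ Finset.range J, p μ k ((w i)⁻¹*gm) := by
    have := Finset.sum_lt_sum_of_nonempty (s := Finset.range J)
      (Finset.nonempty_range_iff.2 (by omega)) (f := fun _ => Φ/2)
      (g := fun i => p μ k ((w i)⁻¹*gm)) (fun i hi => hpt i (Finset.mem_range.1 hi))
    rwa [Finset.sum_const, Finset.card_range, nsmul_eq_mul] at this
  have hle1 : ∑ g ∈ (Finset.range J).image (fun i => (w i)⁻¹ * gm), p μ k g ≤ 1 := by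
    have hsub : T S k ⊆ (Finset.range J).image (fun i => (w i)⁻¹ * gm) ∪ T S k :=
      Finset.subset_union_right
    have hone := sum_p_eq_one μ hsupp k hsub
    calc ∑ g ∈ (Finset.range J).image (fun i => (w i)⁻¹ * gm), p μ k g
        ≤ ∑ g ∈ (Finset.range J).image (fun i => (w i)⁻¹ * gm) ∪ T S k, p μ k g :=
          Finset.sum_le_sum_of_subset_of_nonneg Finset.subset_union_left
            (fun g _ _ => p_nonneg μ k g)
      _ = 1 := hone
  have hfinal : (1:ℝ) < (J:ℝ) * (Φ/2) := by
    have hmul := mul_lt_mul_of_pos_right hJ (half_pos hΦ0)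
    have heq : (2/Φ) * (Φ/2) = 1 := by
      field_simp
    rw [heq] at hmul
    exact hmul
  rw [← hsumA] at hgt
  linarith

lemma Fc_to_zero (hsupp : ∀ g : G, μ {g} ≠ 0 ↔ g ∈ S) (hSne : S.Nonempty)
    {ρ : ℕ} (hρ1 : 1 ≤ ρ) (hρT : (1:G) ∈ T S ρ)
    (hne : ∀ m, (Sph S m).Nonempty) :
    Tendsto (Fc μ S) atTop (𝓝 0) := by
  have hbdd : BddBelow (Set.range (Fc μ S)) :=
    ⟨0, by rintro x ⟨n, rfl⟩; exact Fc_nonneg n⟩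
  have hF : Tendsto (Fc μ S) atTop (𝓝 (⨅ n, Fc μ S n)) :=
    tendsto_atTop_ciInf (Fc_antitone hsupp) hbdd
  have hge : 0 ≤ ⨅ n, Fc μ S n := le_ciInf fun n => Fc_nonneg n
  rcases eq_or_lt_of_le hge with h0 | hpos
  · rwa [← h0] at hF
  · exact absurd (Phi_pos_false hsupp hSne hρ1 hρT hne hpos) (fun h => h)

end PartC2

section PartD

lemma sum_const_mul_avg {G : Type*} {A : Finset G} {q v : G → ℝ}
    (hconst : ∀ g ∈ A, ∀ g' ∈ A, q g = q g') (hA : A.Nonempty) :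
    ∑ g ∈ A, q g * v g = (∑ g ∈ A, q g) * ((∑ g ∈ A, v g) / (A.card : ℝ)) := by
  obtain ⟨g₀, hg₀⟩ := hA
  have hcard : (0:ℝ) < (A.card : ℝ) := by
    have := Finset.card_pos.2 ⟨g₀, hg₀⟩
    exact_mod_cast this
  have h1 : ∑ g ∈ A, q g * v g = q g₀ * ∑ g ∈ A, v g := by
    rw [Finset.mul_sum]
    exact Finset.sum_congr rfl fun g hg => by rw [hconst g hg g₀ hg₀]
  have h2 : ∑ g ∈ A, q g = (A.card : ℝ) * q g₀ := by
    rw [Finset.sum_congr rfl fun g hg => hconst g hg g₀ hg₀, Finset.sum_const,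
      nsmul_eq_mul]
  rw [h1, h2]
  field_simp

/-- generic Toeplitz-type limit -/
lemma toeplitz {w : ℕ → ℕ → ℝ} {A : ℕ → ℝ} {L C : ℝ}
    (hw0 : ∀ n m, 0 ≤ w n m) (hw1 : ∀ n, ∑ m ∈ Finset.range (n+1), w n m = 1)
    (hA : Tendsto A atTop (𝓝 L)) (hAbd : ∀ m, |A m| ≤ C)
    (hesc : ∀ m, Tendsto (fun n => w n m) atTop (𝓝 0)) :
    Tendsto (fun n => ∑ m ∈ Finset.range (n+1), w n m * A m) atTop (𝓝 L) := by
  rw [Metric.tendsto_atTop]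
  intro ε hε
  have hC0 : 0 ≤ C := le_trans (abs_nonneg _) (hAbd 0)
  obtain ⟨M, hM⟩ := (Metric.tendsto_atTop.1 hA) (ε/2) (by positivity)
  set D := C + |L| + 1 with hD
  have hD0 : 0 < D := by positivity
  have hsm : Tendsto (fun n => ∑ m ∈ Finset.range M, w n m) atTop (𝓝 0) := by
    have h := tendsto_finset_sum (Finset.range M) (fun m _ => hesc m)
    simpa using h
  obtain ⟨N1, hN1⟩ := (Metric.tendsto_atTop.1 hsm) (ε/(2*D)) (by positivity)
  refine ⟨max M N1, fun n hn => ?_⟩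
  have hnM : M ≤ n := le_trans (le_max_left _ _) hn
  have hnN1 : N1 ≤ n := le_trans (le_max_right _ _) hn
  have hsmall : ∑ m ∈ Finset.range M, w n m < ε/(2*D) := by
    have := hN1 n hnN1
    rw [Real.dist_eq, sub_zero, abs_of_nonneg (Finset.sum_nonneg fun m _ => hw0 n m)] at this
    exact this
  have hdiff : (∑ m ∈ Finset.range (n+1), w n m * A m) - L
      = ∑ m ∈ Finset.range (n+1), w n m * (A m - L) := by
    have : ∑ m ∈ Finset.range (n+1), w n m * (A m - L)
        = (∑ m ∈ Finset.range (n+1), w n m * A m)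
          - (∑ m ∈ Finset.range (n+1), w n m) * L := by
      rw [Finset.sum_mul, ← Finset.sum_sub_distrib]
      exact Finset.sum_congr rfl fun m _ => by ring
    rw [this, hw1 n, one_mul]
  have habs : dist (∑ m ∈ Finset.range (n+1), w n m * A m) L
      ≤ ∑ m ∈ Finset.range (n+1), w n m * |A m - L| := by
    rw [Real.dist_eq, hdiff]
    refine le_trans (Finset.abs_sum_le_sum_abs _ _) ?_
    refine Finset.sum_le_sum fun m _ => ?_
    rw [abs_mul, abs_of_nonneg (hw0 n m)]
  have hsplit : ∑ m ∈ Finset.range (n+1), w n m * |A m - L|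
      = (∑ m ∈ Finset.range M, w n m * |A m - L|)
        + ∑ m ∈ Finset.Ico M (n+1), w n m * |A m - L| := by
    rw [Finset.range_eq_Ico, ← Finset.sum_Ico_consecutive _ (Nat.zero_le M) (by omega : M ≤ n+1), ← Finset.range_eq_Ico]
  have hpart1 : ∑ m ∈ Finset.range M, w n m * |A m - L| < ε/2 := by
    have hb : ∀ m ∈ Finset.range M, w n m * |A m - L| ≤ w n m * D := by
      intro m _
      refine mul_le_mul_of_nonneg_left ?_ (hw0 n m)
      have h1 := hAbd m
      have h2 : |A m - L| ≤ |A m| + |L| := abs_sub _ _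
      rw [hD]
      linarith
    calc ∑ m ∈ Finset.range M, w n m * |A m - L| ≤ ∑ m ∈ Finset.range M, w n m * D :=
          Finset.sum_le_sum hb
      _ = (∑ m ∈ Finset.range M, w n m) * D := by rw [Finset.sum_mul]
      _ < (ε/(2*D)) * D := by
          exact mul_lt_mul_of_pos_right hsmall hD0
      _ = ε/2 := by field_simp
  have hpart2 : ∑ m ∈ Finset.Ico M (n+1), w n m * |A m - L| ≤ ε/2 := by
    have hb : ∀ m ∈ Finset.Ico M (n+1), w n m * |A m - L| ≤ w n m * (ε/2) := by
      intro m hm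
      refine mul_le_mul_of_nonneg_left ?_ (hw0 n m)
      have hMm : M ≤ m := (Finset.mem_Ico.1 hm).1
      have := hM m hMm
      rw [Real.dist_eq] at this
      linarith
    calc ∑ m ∈ Finset.Ico M (n+1), w n m * |A m - L|
        ≤ ∑ m ∈ Finset.Ico M (n+1), w n m * (ε/2) := Finset.sum_le_sum hb
      _ = (∑ m ∈ Finset.Ico M (n+1), w n m) * (ε/2) := by rw [Finset.sum_mul]
      _ ≤ 1 * (ε/2) := by
          refine mul_le_mul_of_nonneg_right ?_ (by positivity)
          rw [← hw1 n, Finset.range_eq_Ico]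
          refine Finset.sum_le_sum_of_subset_of_nonneg ?_ (fun m _ _ => hw0 n m)
          exact Finset.Ico_subset_Ico (Nat.zero_le M) (le_refl _)
      _ = ε/2 := one_mul _
  calc dist (∑ m ∈ Finset.range (n+1), w n m * A m) L
      ≤ ∑ m ∈ Finset.range (n+1), w n m * |A m - L| := habs
    _ = _ + _ := hsplit
    _ < ε/2 + ε/2 := by exact add_lt_add_of_lt_of_le hpart1 hpart2
    _ = ε := by ring

end PartD

end RWalkAux

open RWalkAux in
theorem conv_dirac_tendsto {G : Type*} [Group G] [Countable G] [MeasurableSpace G]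
    [MeasurableSingletonClass G]
    {X : Type*} [MetricSpace X] [CompactSpace X] [MeasurableSpace X] [BorelSpace X]
    [MulAction G X] (hcont : ∀ g : G, Continuous fun x : X => g • x)
    (μ : Measure G) [IsProbabilityMeasure μ]
    (S : Finset G) (hsupp : ∀ g : G, μ {g} ≠ 0 ↔ g ∈ S)
    (hgen : Subgroup.closure (S : Set G) = ⊤)
    (heven : ∀ n m : ℕ, ∃ cnm : ENNReal,
      ∀ g : G, wordLen (S : Set G) g = m → convPow μ n {g} = cnm)
    (ν : Measure X) [IsProbabilityMeasure ν]
    (hword : ∀ f : X → ℝ, Continuous f → ∀ x : X,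
      Tendsto
        (fun n : ℕ =>
          (∑ᶠ g ∈ {g : G | wordLen (S : Set G) g = n}, f (g • x)) /
            (({g : G | wordLen (S : Set G) g = n}).ncard : ℝ))
        atTop (𝓝 (∫ y, f y ∂ν))) :
    ∀ x : X, ∀ f : X → ℝ, Continuous f →
      Tendsto (fun n : ℕ => ∫ y, f y ∂(actConv (convPow μ n) (Measure.dirac x)))
        atTop (𝓝 (∫ y, f y ∂ν)) := by
  intro x f hf
  letI : DecidableEq G := Classical.decEq G
  haveI : Nonempty X := ⟨x⟩
  set L := ∫ y, f y ∂ν with hLdef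
  -- a uniform bound on f
  obtain ⟨y₀, -, hy₀⟩ :=
    isCompact_univ.exists_isMaxOn (Set.univ_nonempty) ((continuous_abs.comp hf).continuousOn)
  set C := |f y₀| with hCdef
  have hC : ∀ y : X, |f y| ≤ C := fun y => hy₀ (Set.mem_univ y)
  -- all spheres are nonempty
  have hSph : ∀ m : ℕ, (Sph S m).Nonempty := by
    have h1 := hword (fun _ => (1:ℝ)) continuous_const x
    have hone : (∫ _, (1:ℝ) ∂ν) = 1 := by simp
    rw [hone] at h1
    have hev := h1.eventually_const_lt (show (1:ℝ)/2 < 1 by norm_num)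
    intro m
    obtain ⟨n, hn2, hn1⟩ := ((eventually_ge_atTop (max m 1)).and hev).exists
    have h1n : 1 ≤ n := le_trans (le_max_right m 1) hn2
    have hne : (Sph S n).Nonempty := by
      by_contra hemp
      rw [Finset.not_nonempty_iff_eq_empty] at hemp
      have hset : {g : G | wordLen (S : Set G) g = n} = (∅ : Set G) := by
        rw [← coe_Sph h1n, hemp]
        simp
      have hzero : ((({g : G | wordLen (S : Set G) g = n}).ncard) : ℝ) = 0 := by
        rw [hset]
        simp
      rw [hzero, div_zero] at hn1
      norm_num at hn1
    exact sph_nonempty_mono hne (le_trans (le_max_left m 1) hn2)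
  -- the support is nonempty
  have hSne : S.Nonempty := by
    obtain ⟨g, hg⟩ := hSph 1
    obtain ⟨l, hl, hm, hp⟩ := mem_T.1 (mem_T_of_mem_Sph hg)
    obtain ⟨s, rfl⟩ := List.length_eq_one_iff.1 hl
    exact ⟨s, hm s (by simp)⟩
  -- every element of G is a product of elements of S
  obtain ⟨c00, hc00⟩ := heven 0 0
  have hc1 : c00 = 1 := by
    have h := hc00 1 wordLen_one
    rw [← h]
    exact P_zero_one μ
  have hrep : ∀ g : G, wordLen (S : Set G) g = 0 → g = 1 := by
    intro g hg
    by_contra hne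
    have h1 : convPow μ 0 {g} = c00 := hc00 g hg
    have h2 : P μ 0 g = 0 := P_zero_ne μ hne
    rw [hc1] at h1
    have h3 : P μ 0 g = (1 : ENNReal) := h1
    rw [h2] at h3
    simp at h3
  have hmemT : ∀ g : G, g ∈ T S (wordLen (S : Set G) g) := by
    intro g
    rcases eq_or_ne g 1 with rfl | hne
    · rw [wordLen_one]
      exact one_mem_T_zero
    · have h1 : 1 ≤ wordLen (S : Set G) g := by
        rcases Nat.eq_zero_or_pos (wordLen (S : Set G) g) with h0 | h0
        · exact absurd (hrep g h0) hne
        · exact h0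
      exact mem_T_of_wordLen rfl h1
  -- a "padding" length ρ with 1 ∈ T S ρ
  have hSne' := hSne
  obtain ⟨s, hs⟩ := hSne'
  have h1T : (1:G) ∈ T S (1 + wordLen (S : Set G) s⁻¹) := by
    have := mem_T_mul (mem_T_single hs) (hmemT s⁻¹)
    rwa [show s * s⁻¹ = 1 by group] at this
  -- escape of mass to infinity
  have hFc0 : Tendsto (Fc μ S) atTop (𝓝 0) :=
    Fc_to_zero hsupp hSne (by omega : 1 ≤ 1 + wordLen (S : Set G) s⁻¹) h1T hSph
  have hesc : ∀ m, Tendsto (fun n => ∑ g ∈ Sph S m, p μ n g) atTop (𝓝 0) :=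
    escape hsupp hFc0
  -- disjointness of spheres
  have hdisj : ∀ n : ℕ, (↑(Finset.range (n+1)) : Set ℕ).PairwiseDisjoint (Sph S) := by
    intro n i _ j _ hij
    exact Finset.disjoint_left.2 fun g hgi hgj =>
      hij (by rw [← wordLen_of_mem_Sph hgi, wordLen_of_mem_Sph hgj])
  -- sphere averages and weights
  set Am : ℕ → ℝ := fun m => (∑ g ∈ Sph S m, f (g • x)) / ((Sph S m).card : ℝ) with hAmdef
  set wgt : ℕ → ℕ → ℝ := fun n m => ∑ g ∈ Sph S m, p μ n g with hwdef
  -- the integral formula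
  have hφmeas : Measurable (fun q : G × X => q.1 • q.2) := by
    have h1 : Measurable (fun q : X × G => q.2 • q.1) :=
      measurable_from_prod_countable_left (fun g => (hcont g).measurable)
    have h2 : (fun q : G × X => q.1 • q.2) = (fun q : X × G => q.2 • q.1) ∘ Prod.swap := rfl
    rw [h2]
    exact h1.comp measurable_swap
  have hIntegral : ∀ n : ℕ, ∫ y, f y ∂(actConv (convPow μ n) (Measure.dirac x))
      = ∑ m ∈ Finset.range (n+1), wgt n m * Am m := by
    intro n
    haveI := convPow_prob μ n
    have hmap : actConv (convPow μ n) (Measure.dirac x)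
        = Measure.map (fun g : G => g • x) (convPow μ n) := by
      rw [RWalk.actConv, Measure.prod_dirac, Measure.map_map hφmeas (measurable_of_countable _)]
      rfl
    rw [hmap]
    have hfm : Measurable (fun g : G => f (g • x)) := measurable_of_countable _
    rw [integral_map (measurable_of_countable _).aemeasurable hf.aestronglyMeasurable]
    have hint : Integrable (fun g : G => f (g • x)) (convPow μ n) := by
      refine Integrable.mono' (integrable_const C) hfm.aestronglyMeasurable ?_
      exact Filter.Eventually.of_forall fun g => by
        simpa [Real.norm_eq_abs] using hC (g • x)
    rw [integral_countable' hint]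
    have hvan : ∀ g ∉ B S n, (convPow μ n {g}).toReal • f (g • x) = 0 := by
      intro g hg
      have hgT : g ∉ T S n := fun h => hg (T_subset_B h)
      have h0 : P μ n g = 0 := P_support μ hsupp n hgT
      rw [show (convPow μ n) {g} = P μ n g from rfl, h0]
      simp
    change ∑' g : G, (convPow μ n {g}).toReal • f (g • x) = _
    rw [tsum_eq_sum hvan]
    have hstep : ∑ g ∈ B S n, (convPow μ n {g}).toReal • f (g • x)
        = ∑ m ∈ Finset.range (n+1), ∑ g ∈ Sph S m, p μ n g * f (g • x) := by
      rw [B, Finset.sum_biUnion (hdisj n)]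
      rfl
    rw [hstep]
    refine Finset.sum_congr rfl fun m _ => ?_
    obtain ⟨c, hc⟩ := heven n m
    have hconst : ∀ g ∈ Sph S m, ∀ g' ∈ Sph S m, p μ n g = p μ n g' := by
      intro g hg g' hg'
      unfold RWalkAux.p RWalkAux.P
      rw [hc g (wordLen_of_mem_Sph hg), hc g' (wordLen_of_mem_Sph hg')]
    exact sum_const_mul_avg hconst (hSph m)
  -- weight properties
  have hw0 : ∀ n m, 0 ≤ wgt n m := fun n m => Finset.sum_nonneg fun g _ => p_nonneg μ n g
  have hw1 : ∀ n, ∑ m ∈ Finset.range (n+1), wgt n m = 1 := by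
    intro n
    have hb : ∑ m ∈ Finset.range (n+1), wgt n m = ∑ g ∈ B S n, p μ n g := by
      rw [B, Finset.sum_biUnion (hdisj n)]
    rw [hb]
    exact sum_p_eq_one μ hsupp n T_subset_B
  -- boundedness of the averages
  have hAbd : ∀ m, |Am m| ≤ C := by
    intro m
    have hcard : (0:ℝ) < ((Sph S m).card : ℝ) := by
      exact_mod_cast Finset.card_pos.2 (hSph m)
    rw [hAmdef]
    simp only
    rw [abs_div, Nat.abs_cast, div_le_iff₀ hcard]
    calc |∑ g ∈ Sph S m, f (g • x)| ≤ ∑ g ∈ Sph S m, |f (g • x)| :=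
          Finset.abs_sum_le_sum_abs _ _
      _ ≤ ∑ _g ∈ Sph S m, C := Finset.sum_le_sum fun g _ => hC _
      _ = ((Sph S m).card : ℝ) * C := by rw [Finset.sum_const, nsmul_eq_mul]
      _ = C * ((Sph S m).card : ℝ) := mul_comm _ _
  -- convergence of the averages
  have hAmT : Tendsto Am atTop (𝓝 L) := by
    refine Filter.Tendsto.congr' ?_ (hword f hf x)
    filter_upwards [eventually_ge_atTop 1] with m hm
    show (∑ᶠ g ∈ {g : G | wordLen (S : Set G) g = m}, f (g • x)) /
        (({g : G | wordLen (S : Set G) g = m}).ncard : ℝ) = Am m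
    rw [← coe_Sph hm, finsum_mem_coe_finset, Set.ncard_coe_finset]
  -- conclude
  have hT := toeplitz hw0 hw1 hAmT hAbd (fun m => hesc m)
  exact hT.congr (fun n => (hIntegral n).symm)
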